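/- arXiv:0712.4106 — 4 statements merged into one kernel-verified Lean document; each statement's English description precedes it below -/
import Mathlib

section
/- Let η : ℤ → ℝ satisfy η(x+2) − (2 + r₁⁽¹⁾) η(x+1) + η(x) = r₋₁⁽²⁾ for all x, with η(0) = 0, and define η(−1) := r₋₁⁽²⁾ − η(1). For each of the five cases η(x) = x; η(x) = ε' x(x+d); η(x) = 1 − q^x; η(x) = q^{−x} − 1; η(x) = ε'(q^{−x}−1)(1−dq^x), the identity −(η(x+1) − η(x))(η(x−1) − η(x)) = r₁⁽¹⁾ η(x)² + 2 r₋₁⁽²⁾ η(x) − η(1) η(−1) holds for all x, where r₁⁽¹⁾ and r₋₁⁽²⁾ are the corresponding constants (0, 0; 0, 2ε'; (q^{−1/2}−q^{1/2})², −(q^{−1/2}−q^{1/2})²; (q^{−1/2}−q^{1/2})², (q^{−1/2}−q^{1/2})²; (q^{−1/2}−q^{1/2})², (q^{−1/2}−q^{1/2})² ε'(1+d)). -/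
theorem stmt_6 (q d ε' : ℝ) (hq : 0 < q) (hq1 : q < 1) (hε : ε' = 1 ∨ ε' = -1) :
    (∀ η : ℤ → ℝ, (∀ x : ℤ, η x = (x : ℝ)) →
      ∀ x : ℤ, -((η (x + 1) - η x) * (η (x - 1) - η x)) =
        0 * η x ^ 2 + 2 * 0 * η x - η 1 * η (-1)) ∧
    (∀ η : ℤ → ℝ, (∀ x : ℤ, η x = ε' * (x : ℝ) * ((x : ℝ) + d)) →
      ∀ x : ℤ, -((η (x + 1) - η x) * (η (x - 1) - η x)) =
        0 * η x ^ 2 + 2 * (2 * ε') * η x - η 1 * η (-1)) ∧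
    (∀ η : ℤ → ℝ, (∀ x : ℤ, η x = 1 - q ^ x) →
      ∀ x : ℤ, -((η (x + 1) - η x) * (η (x - 1) - η x)) =
        ((Real.sqrt q)⁻¹ - Real.sqrt q) ^ 2 * η x ^ 2 +
        2 * (-((Real.sqrt q)⁻¹ - Real.sqrt q) ^ 2) * η x - η 1 * η (-1)) ∧
    (∀ η : ℤ → ℝ, (∀ x : ℤ, η x = q ^ (-x) - 1) →
      ∀ x : ℤ, -((η (x + 1) - η x) * (η (x - 1) - η x)) =
        ((Real.sqrt q)⁻¹ - Real.sqrt q) ^ 2 * η x ^ 2 +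
        2 * ((Real.sqrt q)⁻¹ - Real.sqrt q) ^ 2 * η x - η 1 * η (-1)) ∧
    (∀ η : ℤ → ℝ, (∀ x : ℤ, η x = ε' * (q ^ (-x) - 1) * (1 - d * q ^ x)) →
      ∀ x : ℤ, -((η (x + 1) - η x) * (η (x - 1) - η x)) =
        ((Real.sqrt q)⁻¹ - Real.sqrt q) ^ 2 * η x ^ 2 +
        2 * (((Real.sqrt q)⁻¹ - Real.sqrt q) ^ 2 * ε' * (1 + d)) * η x -
        η 1 * η (-1)) := by
  have hq0 : q ≠ 0 := ne_of_gt hq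
  have hs : ((Real.sqrt q)⁻¹ - Real.sqrt q) ^ 2 = q⁻¹ + q - 2 := by
    have h1 : Real.sqrt q * Real.sqrt q = q := Real.mul_self_sqrt hq.le
    have h2 : Real.sqrt q ≠ 0 := by positivity
    field_simp
    rw [Real.sq_sqrt hq.le]; ring
  have hx : ∀ x : ℤ, q ^ x ≠ 0 := fun x => zpow_ne_zero x hq0
  refine ⟨?_, ?_, ?_, ?_, ?_⟩ <;> intro η hη x <;> simp only [hη, hs]
  · push_cast; ring
  · rcases hε with h | h <;> subst h <;> push_cast <;> ring
  · simp only [zpow_add₀ hq0, zpow_sub₀ hq0, zpow_one]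
    field_simp
    ring
  · simp only [neg_add, neg_sub, sub_eq_add_neg, zpow_add₀ hq0, zpow_neg, zpow_one]
    field_simp
    ring
  · rcases hε with h | h <;> subst h <;>
      simp only [neg_add, neg_sub, sub_eq_add_neg, zpow_add₀ hq0, zpow_neg, zpow_one] <;>
      field_simp <;> ring
end

section
/- Let B(x) = p(N − x) and D(x) = (1 − p)x with 0 < p < 1 (Krawtchouk case), and define the operator H̃ on functions f : {0,…,N} → ℝ by (H̃f)(x) = B(x)(f(x) − f(x+1)) + D(x)(f(x) − f(x−1)). Then for each n with 0 ≤ n ≤ N, the Krawtchouk polynomial P_n(x) = ₂F₁(−n, −x; −N; 1/p) (a terminating hypergeometric sum) satisfies H̃ P_n = n P_n. -/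
/-- The Pochhammer symbol `(a)_k = a(a+1)⋯(a+k-1)` for real `a`. -/
noncomputable def poch (a : ℝ) (k : ℕ) : ℝ := ∏ j ∈ Finset.range k, (a + j)

/-- The Krawtchouk polynomial `P_n(x) = ₂F₁(-n, -x; -N; 1/p)` (terminating sum),
normalised so that `P_n(0) = 1`. -/
noncomputable def krawtchouk (p : ℝ) (N n x : ℕ) : ℝ :=
  ∑ k ∈ Finset.range (n + 1),
    poch (-(n : ℝ)) k * poch (-(x : ℝ)) k /
      (poch (-(N : ℝ)) k * (Nat.factorial k)) * (1 / p) ^ k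

namespace KrawAux

noncomputable def c (p : ℝ) (N n k : ℕ) : ℝ :=
  poch (-(n : ℝ)) k / (poch (-(N : ℝ)) k * (Nat.factorial k)) * (1 / p) ^ k

noncomputable def Kr (p : ℝ) (N n : ℕ) (a : ℝ) : ℝ :=
  ∑ k ∈ Finset.range (n + 1), c p N n k * poch a k

lemma poch_zero (a : ℝ) : poch a 0 = 1 := by simp [poch]

lemma poch_succ (a : ℝ) (k : ℕ) : poch a (k + 1) = poch a k * (a + k) := by
  simp [poch, Finset.prod_range_succ]

lemma poch_succ' (a : ℝ) (k : ℕ) : poch a (k + 1) = a * poch (a + 1) k := by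
  rw [poch, Finset.prod_range_succ', poch]
  rw [mul_comm]
  congr 1
  · norm_num
  · exact Finset.prod_congr rfl fun j _ => by push_cast; ring

lemma poch_pred (a : ℝ) (k : ℕ) : poch (a - 1) (k + 1) = (a - 1) * poch a k := by
  simpa using poch_succ' (a - 1) k

lemma kraw_eq (p : ℝ) (N n x : ℕ) : krawtchouk p N n x = Kr p N n (-(x : ℝ)) := by
  unfold krawtchouk Kr c
  exact Finset.sum_congr rfl fun k _ => by ring

lemma poch_negN_ne (N m : ℕ) (h : m ≤ N) : poch (-(N : ℝ)) m ≠ 0 := by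
  unfold poch
  apply Finset.prod_ne_zero_iff.mpr
  intro j hj
  have hjm : j < m := Finset.mem_range.mp hj
  have : (j : ℝ) < (N : ℝ) := by exact_mod_cast lt_of_lt_of_le hjm h
  intro hc
  nlinarith

lemma cA (p : ℝ) (hp : p ≠ 0) (N n m : ℕ) (hm : m < n) (hn : n ≤ N) :
    c p N n (m + 1) * ((m : ℝ) + 1) * (p * ((N : ℝ) - m)) = ((n : ℝ) - m) * c p N n m := by
  have hmN : m < N := lt_of_lt_of_le hm hn
  unfold c
  rw [poch_succ (-(n : ℝ)) m, poch_succ (-(N : ℝ)) m, Nat.factorial_succ, pow_succ]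
  have hD : poch (-(N : ℝ)) m ≠ 0 := poch_negN_ne N m (le_of_lt hmN)
  have hNm : -(N : ℝ) + m ≠ 0 := by
    have : (m : ℝ) < (N : ℝ) := by exact_mod_cast hmN
    intro hc; linarith
  have hf : ((Nat.factorial m : ℝ)) ≠ 0 := by
    exact_mod_cast Nat.factorial_ne_zero m
  push_cast
  field_simp
  ring

lemma diff_down (p : ℝ) (N n : ℕ) (a : ℝ) :
    Kr p N n a - Kr p N n (a - 1)
      = ∑ m ∈ Finset.range n, c p N n (m + 1) * ((m : ℝ) + 1) * poch a m := by
  unfold Kr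
  rw [← Finset.sum_sub_distrib, Finset.sum_range_succ']
  have h0 : c p N n 0 * poch a 0 - c p N n 0 * poch (a - 1) 0 = 0 := by
    rw [poch_zero, poch_zero]; ring
  rw [h0, add_zero]
  refine Finset.sum_congr rfl fun m _ => ?_
  rw [poch_succ a m, poch_pred a m]
  ring

lemma diff_up (p : ℝ) (N n : ℕ) (a : ℝ) :
    Kr p N n a - Kr p N n (a + 1)
      = -∑ m ∈ Finset.range n, c p N n (m + 1) * ((m : ℝ) + 1) * poch (a + 1) m := by
  unfold Kr
  rw [← Finset.sum_sub_distrib, Finset.sum_range_succ']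
  have h0 : c p N n 0 * poch a 0 - c p N n 0 * poch (a + 1) 0 = 0 := by
    rw [poch_zero, poch_zero]; ring
  rw [h0, add_zero, ← Finset.sum_neg_distrib]
  refine Finset.sum_congr rfl fun m _ => ?_
  rw [poch_succ' a m, poch_succ (a + 1) m]
  ring

lemma sum_split (p : ℝ) (N n : ℕ) (a : ℝ) :
    ∑ m ∈ Finset.range n,
        (((n : ℝ) - m) * (c p N n m * poch a m)
          + ((m : ℝ) + 1) * (c p N n (m + 1) * poch a (m + 1)))
      = ∑ k ∈ Finset.range (n + 1), (n : ℝ) * (c p N n k * poch a k) := by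
  rw [Finset.sum_add_distrib]
  have h1 : ∑ m ∈ Finset.range n, ((n : ℝ) - m) * (c p N n m * poch a m)
      = ∑ k ∈ Finset.range (n + 1), ((n : ℝ) - k) * (c p N n k * poch a k) := by
    rw [Finset.sum_range_succ]
    simp
  have h2 : ∑ m ∈ Finset.range n, ((m : ℝ) + 1) * (c p N n (m + 1) * poch a (m + 1))
      = ∑ k ∈ Finset.range (n + 1), (k : ℝ) * (c p N n k * poch a k) := by
    rw [Finset.sum_range_succ']
    push_cast
    simp
  rw [h1, h2, ← Finset.sum_add_distrib]
  exact Finset.sum_congr rfl fun k _ => by ring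

lemma key (p : ℝ) (N n : ℕ) (hp : p ≠ 0) (hn : n ≤ N) (a : ℝ) :
    p * ((N : ℝ) + a) * (Kr p N n a - Kr p N n (a - 1))
      + (1 - p) * (-a) * (Kr p N n a - Kr p N n (a + 1))
      = (n : ℝ) * Kr p N n a := by
  have hR : (n : ℝ) * Kr p N n a
      = ∑ k ∈ Finset.range (n + 1), (n : ℝ) * (c p N n k * poch a k) := by
    unfold Kr; rw [Finset.mul_sum]
  rw [diff_down, diff_up, hR, ← sum_split p N n a, ← Finset.sum_neg_distrib,
    Finset.mul_sum, Finset.mul_sum, ← Finset.sum_add_distrib]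
  refine Finset.sum_congr rfl fun m hm => ?_
  have hmn : m < n := Finset.mem_range.mp hm
  have hkey := cA p hp N n m hmn hn
  have hps : poch a (m + 1) = a * poch (a + 1) m := poch_succ' a m
  have hps2 : poch a (m + 1) = poch a m * (a + m) := poch_succ a m
  linear_combination poch a m * hkey
    - ((1 - p) * ((m : ℝ) + 1) * c p N n (m + 1)) * hps
    - (p * ((m : ℝ) + 1) * c p N n (m + 1)) * hps2

end KrawAux

theorem stmt_7 (p : ℝ) (hp : 0 < p) (hp1 : p < 1) (N n : ℕ) (hn : n ≤ N) :
    ∀ x : ℕ, x ≤ N →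
      p * ((N : ℝ) - (x : ℝ)) * (krawtchouk p N n x - krawtchouk p N n (x + 1)) +
      (1 - p) * (x : ℝ) * (krawtchouk p N n x - krawtchouk p N n (x - 1)) =
      (n : ℝ) * krawtchouk p N n x := by
  intro x hx
  rw [KrawAux.kraw_eq, KrawAux.kraw_eq, KrawAux.kraw_eq]
  rcases Nat.eq_zero_or_pos x with h0 | hpos
  · subst h0
    have h := KrawAux.key p N n (ne_of_gt hp) hn 0
    norm_num at h ⊢
    linear_combination h
  · obtain ⟨y, rfl⟩ := Nat.exists_eq_succ_of_ne_zero (Nat.pos_iff_ne_zero.mp hpos)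
    have h := KrawAux.key p N n (ne_of_gt hp) hn (-(((y + 1 : ℕ)) : ℝ))
    rw [show (-(((y + 1 + 1 : ℕ)) : ℝ)) = -(((y + 1 : ℕ)) : ℝ) - 1 from by push_cast; ring,
      show (-(((y + 1 - 1 : ℕ)) : ℝ)) = -(((y + 1 : ℕ)) : ℝ) + 1 from by
        rw [Nat.add_sub_cancel]; push_cast; ring]
    linear_combination h
end

section
/- Let B(x) = ε(x+a)(N−x) and D(x) = ε x(b+N−x) (Hahn case, with ε = 1 if a,b > 0). Then the Hahn polynomial Q_n(x) = ₃F₂(−n, n+a+b−1, −x; a, −N; 1) satisfies the difference equation B(x)(Q_n(x) − Q_n(x+1)) + D(x)(Q_n(x) − Q_n(x−1)) = ε n(n+a+b−1) Q_n(x) for 0 ≤ x ≤ N. -/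
/-- The Hahn polynomial `Q_n(x) = ₃F₂(-n, n+a+b-1, -x; a, -N; 1)` (terminating sum). -/
noncomputable def hahn (a b : ℝ) (N n x : ℕ) : ℝ :=
  ∑ k ∈ Finset.range (n + 1),
    poch (-(n : ℝ)) k * poch ((n : ℝ) + a + b - 1) k * poch (-(x : ℝ)) k /
      (poch a k * poch (-(N : ℝ)) k * (Nat.factorial k))

lemma poch_zero (a : ℝ) : poch a 0 = 1 := by simp [poch]

lemma poch_succ (a : ℝ) (k : ℕ) : poch a (k + 1) = poch a k * (a + k) := by
  simp [poch, Finset.prod_range_succ]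

lemma poch_succ_left (a : ℝ) (k : ℕ) : poch a (k + 1) = a * poch (a + 1) k := by
  induction k with
  | zero => simp [poch_zero, poch_succ]
  | succ k ih =>
    rw [poch_succ, ih, poch_succ]
    push_cast
    ring

lemma poch_pos {a : ℝ} (ha : 0 < a) (k : ℕ) : 0 < poch a k := by
  apply Finset.prod_pos
  intro j _
  positivity

lemma poch_neg_ne {N k : ℕ} (h : k ≤ N) : poch (-(N : ℝ)) k ≠ 0 := by
  unfold poch
  rw [Finset.prod_ne_zero_iff]
  intro j hj
  have hjN : j < N := lt_of_lt_of_le (Finset.mem_range.mp hj) h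
  have hj' : (j : ℝ) < N := by exact_mod_cast hjN
  intro h0
  linarith

lemma pochD1 (x : ℝ) (k : ℕ) :
    poch (-(x + 1)) (k + 1) = poch (-x) (k + 1) - ((k : ℝ) + 1) * poch (-x) k := by
  induction k with
  | zero => simp [poch_succ, poch_zero]; ring
  | succ k ih =>
    rw [poch_succ (-(x+1)) (k+1), ih, poch_succ (-x) (k+1), poch_succ (-x) k]
    push_cast
    ring

lemma pochD2 (x : ℝ) (k : ℕ) :
    x * (poch (-x) (k + 1) - poch (-(x - 1)) (k + 1)) = ((k : ℝ) + 1) * poch (-x) (k + 1) := by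
  have h1 := pochD1 (x - 1) k
  have h2 : -(x - 1 + 1) = -x := by ring
  rw [h2] at h1
  have h4 : -(x - 1) = -x + 1 := by ring
  rw [h4] at h1
  have h3 : poch (-x) (k + 1) = -x * poch (-x + 1) k := poch_succ_left (-x) k
  rw [h4]
  linear_combination x * h1 - ((k : ℝ) + 1) * h3

/-- The coefficient of `poch (-x) k` in the Hahn polynomial. -/
noncomputable def Acoef (a b : ℝ) (N n k : ℕ) : ℝ :=
  poch (-(n : ℝ)) k * poch ((n : ℝ) + a + b - 1) k /
    (poch a k * poch (-(N : ℝ)) k * (Nat.factorial k))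

/-- The Hahn polynomial as a function of a real variable. -/
noncomputable def SS (a b : ℝ) (N n : ℕ) (x : ℝ) : ℝ :=
  ∑ k ∈ Finset.range (n + 1), Acoef a b N n k * poch (-x) k

lemma hahn_eq (a b : ℝ) (N n x : ℕ) : hahn a b N n x = SS a b N n (x : ℝ) := by
  unfold hahn SS Acoef
  exact Finset.sum_congr rfl fun k _ => by ring

lemma Arec (a b : ℝ) (ha : 0 < a) (N n : ℕ) (hn : n ≤ N) (m : ℕ) (hm : m < n) :
    ((m : ℝ) + 1) * (a + m) * ((N : ℝ) - m) * Acoef a b N n (m + 1) =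
    ((n : ℝ) - m) * ((n : ℝ) + a + b - 1 + m) * Acoef a b N n m := by
  have hmN : m < N := lt_of_lt_of_le hm hn
  have h1 : poch a m ≠ 0 := ne_of_gt (poch_pos ha m)
  have h2 : poch (-(N : ℝ)) m ≠ 0 := poch_neg_ne (le_of_lt hmN)
  have h3 : (Nat.factorial m : ℝ) ≠ 0 := by
    exact_mod_cast Nat.factorial_ne_zero m
  have h4 : a + (m : ℝ) ≠ 0 := by positivity
  have h5 : -(N : ℝ) + m ≠ 0 := by
    have : (m : ℝ) < N := by exact_mod_cast hmN
    intro h; linarith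
  have h6 : (m : ℝ) + 1 ≠ 0 := by positivity
  unfold Acoef
  rw [poch_succ, poch_succ, poch_succ, poch_succ, Nat.factorial_succ]
  push_cast
  field_simp
  ring

lemma term_eq (a b : ℝ) (ha : 0 < a) (N n : ℕ) (hn : n ≤ N) (x : ℝ) (m : ℕ) (hm : m < n) :
    (x + a) * ((N : ℝ) - x) *
        (Acoef a b N n (m + 1) * (poch (-x) (m + 1) - poch (-(x + 1)) (m + 1)))
      + x * (b + (N : ℝ) - x) *
        (Acoef a b N n (m + 1) * (poch (-x) (m + 1) - poch (-(x - 1)) (m + 1)))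
    = ((n : ℝ) - m) * ((n : ℝ) + a + b - 1 + m) * (Acoef a b N n m * poch (-x) m)
      + ((m : ℝ) + 1) * (a + b + m) * (Acoef a b N n (m + 1) * poch (-x) (m + 1)) := by
  have d1 := pochD1 x m
  have d2 := pochD2 x m
  have hr := Arec a b ha N n hn m hm
  have hs : poch (-x) (m + 1) = poch (-x) m * (-x + m) := poch_succ _ _
  have e1 : (x + a) * ((N : ℝ) - x) *
      (Acoef a b N n (m + 1) * (poch (-x) (m + 1) - poch (-(x + 1)) (m + 1)))
      = (x + a) * ((N : ℝ) - x) * Acoef a b N n (m + 1) * (((m : ℝ) + 1) * poch (-x) m) := by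
    rw [d1]; ring
  have e2 : x * (b + (N : ℝ) - x) *
      (Acoef a b N n (m + 1) * (poch (-x) (m + 1) - poch (-(x - 1)) (m + 1)))
      = (b + (N : ℝ) - x) * Acoef a b N n (m + 1) * (((m : ℝ) + 1) * poch (-x) (m + 1)) := by
    linear_combination (b + (N : ℝ) - x) * Acoef a b N n (m + 1) * d2
  rw [e1, e2, hs]
  linear_combination poch (-x) m * hr

lemma key (a b : ℝ) (ha : 0 < a) (N n : ℕ) (hn : n ≤ N) (x : ℝ) :
    (x + a) * ((N : ℝ) - x) * (SS a b N n x - SS a b N n (x + 1))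
      + x * (b + (N : ℝ) - x) * (SS a b N n x - SS a b N n (x - 1))
    = (n : ℝ) * ((n : ℝ) + a + b - 1) * SS a b N n x := by
  have step1 : (x + a) * ((N : ℝ) - x) * (SS a b N n x - SS a b N n (x + 1))
      + x * (b + (N : ℝ) - x) * (SS a b N n x - SS a b N n (x - 1))
      = ∑ k ∈ Finset.range (n + 1),
          ((x + a) * ((N : ℝ) - x) * (Acoef a b N n k * (poch (-x) k - poch (-(x + 1)) k))
            + x * (b + (N : ℝ) - x) * (Acoef a b N n k * (poch (-x) k - poch (-(x - 1)) k))) := by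
    unfold SS
    rw [← Finset.sum_sub_distrib, ← Finset.sum_sub_distrib, Finset.mul_sum, Finset.mul_sum,
      ← Finset.sum_add_distrib]
    exact Finset.sum_congr rfl fun k _ => by ring
  rw [step1, Finset.sum_range_succ']
  have h0 : (x + a) * ((N : ℝ) - x) * (Acoef a b N n 0 * (poch (-x) 0 - poch (-(x + 1)) 0))
      + x * (b + (N : ℝ) - x) * (Acoef a b N n 0 * (poch (-x) 0 - poch (-(x - 1)) 0)) = 0 := by
    simp [poch_zero]
  rw [h0, add_zero]
  have step2 : (∑ m ∈ Finset.range n,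
        ((x + a) * ((N : ℝ) - x) *
            (Acoef a b N n (m + 1) * (poch (-x) (m + 1) - poch (-(x + 1)) (m + 1)))
          + x * (b + (N : ℝ) - x) *
            (Acoef a b N n (m + 1) * (poch (-x) (m + 1) - poch (-(x - 1)) (m + 1)))))
      = ∑ m ∈ Finset.range n,
          (((n : ℝ) - m) * ((n : ℝ) + a + b - 1 + m) * (Acoef a b N n m * poch (-x) m)
            + ((m : ℝ) + 1) * (a + b + m) * (Acoef a b N n (m + 1) * poch (-x) (m + 1))) :=
    Finset.sum_congr rfl fun m hm => term_eq a b ha N n hn x m (Finset.mem_range.mp hm)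
  rw [step2, Finset.sum_add_distrib]
  have ext1 : (∑ m ∈ Finset.range n,
        ((n : ℝ) - m) * ((n : ℝ) + a + b - 1 + m) * (Acoef a b N n m * poch (-x) m))
      = ∑ k ∈ Finset.range (n + 1),
          ((n : ℝ) - k) * ((n : ℝ) + a + b - 1 + k) * (Acoef a b N n k * poch (-x) k) := by
    rw [Finset.sum_range_succ]
    simp
  have ext2 : (∑ m ∈ Finset.range n,
        ((m : ℝ) + 1) * (a + b + m) * (Acoef a b N n (m + 1) * poch (-x) (m + 1)))
      = ∑ k ∈ Finset.range (n + 1),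
          (k : ℝ) * (a + b + k - 1) * (Acoef a b N n k * poch (-x) k) := by
    rw [Finset.sum_range_succ']
    norm_num
    exact Finset.sum_congr rfl fun m _ => by push_cast; ring
  rw [ext1, ext2, ← Finset.sum_add_distrib]
  unfold SS
  rw [Finset.mul_sum]
  exact Finset.sum_congr rfl fun k _ => by ring

theorem stmt_15 (a b : ℝ) (ha : 0 < a) (hb : 0 < b) (N : ℕ) (hN : 1 ≤ N)
    (n : ℕ) (hn : n ≤ N) :
    ∀ x : ℕ, x ≤ N →
      ((x : ℝ) + a) * ((N : ℝ) - (x : ℝ)) * (hahn a b N n x - hahn a b N n (x + 1)) +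
      (x : ℝ) * (b + (N : ℝ) - (x : ℝ)) * (hahn a b N n x - hahn a b N n (x - 1)) =
      (n : ℝ) * ((n : ℝ) + a + b - 1) * hahn a b N n x := by
  intro x hx
  rw [hahn_eq, hahn_eq, hahn_eq]
  rcases Nat.eq_zero_or_pos x with h0 | h1
  · subst h0
    have k := key a b ha N n hn 0
    simpa using k
  · have k := key a b ha N n hn (x : ℝ)
    have hc : ((x - 1 : ℕ) : ℝ) = (x : ℝ) - 1 := by
      have h1' : 1 ≤ x := h1
      push_cast [h1']
      ring
    have hc2 : ((x + 1 : ℕ) : ℝ) = (x : ℝ) + 1 := by push_cast; ring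
    rw [hc, hc2]
    exact k
end

section
/- Let η : ℕ → ℝ be strictly increasing with η(0) = 0, satisfying η(x+2) − (2+r₁⁽¹⁾)η(x+1) + η(x) = r₋₁⁽²⁾, and let a : ℕ → ℝ satisfy, for all x ≥ 0, (η(x+2) − η(x+1)) a(x+1) + (η(x−1) − η(x)) a(x) = −(η(x+1) + η(x)) r₁⁽⁰⁾ − r₋₁⁽¹⁾ (with η(−1) := r₋₁⁽²⁾ − η(1)) and a(0) = B₀. Then for all x ≥ 0, (η(x+1) − η(x))(η(x−1) − η(x)) a(x) = r₁⁽⁰⁾ η(x)² + r₋₁⁽¹⁾ η(x) + η(1) η(−1) B₀. -/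
theorem stmt_19 (r1 rm2 r10 rm11 B0 : ℝ) (η : ℤ → ℝ) (a : ℕ → ℝ)
    (hη0 : η 0 = 0)
    (hmono : ∀ x : ℤ, 0 ≤ x → η x < η (x + 1))
    (hηrec : ∀ x : ℤ, 0 ≤ x → η (x + 2) - (2 + r1) * η (x + 1) + η x = rm2)
    (hηm1 : η (-1) = rm2 - η 1)
    (ha0 : a 0 = B0)
    (harec : ∀ x : ℕ,
      (η ((x : ℤ) + 2) - η ((x : ℤ) + 1)) * a (x + 1) +
        (η ((x : ℤ) - 1) - η (x : ℤ)) * a x =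
      -(η ((x : ℤ) + 1) + η (x : ℤ)) * r10 - rm11) :
    ∀ x : ℕ,
      (η ((x : ℤ) + 1) - η (x : ℤ)) * (η ((x : ℤ) - 1) - η (x : ℤ)) * a x =
        r10 * η (x : ℤ) ^ 2 + rm11 * η (x : ℤ) + η 1 * η (-1) * B0 := by
  intro x
  induction x with
  | zero =>
      norm_num
      rw [hη0, ha0]
      ring
  | succ n ih =>
      have e1 : (((n + 1 : ℕ)) : ℤ) + 1 = (n : ℤ) + 2 := by push_cast; ring
      have e2 : (((n + 1 : ℕ)) : ℤ) - 1 = (n : ℤ) := by push_cast; ring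
      have e3 : (((n + 1 : ℕ)) : ℤ) = (n : ℤ) + 1 := by push_cast; ring
      rw [e1, e2, e3]
      linear_combination (η (n : ℤ) - η ((n : ℤ) + 1)) * harec n + ih
end
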